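/- Let c be a real number with 0 ≤ c ≤ (3-√5)/4. For every graphon W, m_D(W) - 1/16 ≥ c·(m_{C_4}(W) - 1/8), where D = K_{1,1,2} is the diamond graph (4-cycle plus a diagonal). -/

import Mathlib

open MeasureTheory

/-- Homomorphism density of a single edge `K₂`. -/
noncomputable def tK2 (U : unitInterval → unitInterval → ℝ) : ℝ :=
  ∫ x : Fin 2 → unitInterval, U (x 0) (x 1)

/-- Homomorphism density of the cherry/path `K_{1,2}`. -/
noncomputable def tP3 (U : unitInterval → unitInterval → ℝ) : ℝ :=
  ∫ x : Fin 3 → unitInterval, U (x 0) (x 1) * U (x 1) (x 2)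

/-- Homomorphism density of the triangle `K₃`. -/
noncomputable def tK3 (U : unitInterval → unitInterval → ℝ) : ℝ :=
  ∫ x : Fin 3 → unitInterval, U (x 0) (x 1) * U (x 1) (x 2) * U (x 2) (x 0)

/-- Homomorphism density of the 4-cycle `C₄`. -/
noncomputable def tC4 (U : unitInterval → unitInterval → ℝ) : ℝ :=
  ∫ x : Fin 4 → unitInterval, U (x 0) (x 1) * U (x 1) (x 2) * U (x 2) (x 3) * U (x 3) (x 0)

/-- Homomorphism density of the triangle with a pendant edge `K₃⁺`. -/
noncomputable def tK3p (U : unitInterval → unitInterval → ℝ) : ℝ :=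
  ∫ x : Fin 4 → unitInterval, U (x 0) (x 1) * U (x 1) (x 2) * U (x 2) (x 0) * U (x 2) (x 3)

/-- Homomorphism density of the diamond `D = K_{1,1,2}`. -/
noncomputable def tD (U : unitInterval → unitInterval → ℝ) : ℝ :=
  ∫ x : Fin 4 → unitInterval,
    U (x 0) (x 1) * U (x 0) (x 2) * U (x 0) (x 3) * U (x 1) (x 2) * U (x 1) (x 3)

/-- Homomorphism density of the octahedron `K_{2,2,2}` (parts `{0,1},{2,3},{4,5}`). -/
noncomputable def tK222 (U : unitInterval → unitInterval → ℝ) : ℝ :=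
  ∫ x : Fin 6 → unitInterval,
    U (x 0) (x 2) * U (x 0) (x 3) * U (x 0) (x 4) * U (x 0) (x 5) *
    U (x 1) (x 2) * U (x 1) (x 3) * U (x 1) (x 4) * U (x 1) (x 5) *
    U (x 2) (x 4) * U (x 2) (x 5) * U (x 3) (x 4) * U (x 3) (x 5)

/-- `W` is a graphon: measurable, symmetric, with values in `[0,1]`. -/
def IsGraphon (W : unitInterval → unitInterval → ℝ) : Prop :=
  Measurable (fun p : unitInterval × unitInterval => W p.1 p.2) ∧
    (∀ x y, W x y = W y x) ∧ (∀ x y, 0 ≤ W x y) ∧ (∀ x y, W x y ≤ 1)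

/-- The complementary graphon `1 - W`. -/
def compl' (W : unitInterval → unitInterval → ℝ) : unitInterval → unitInterval → ℝ :=
  fun x y => 1 - W x y


private abbrev I := unitInterval

private lemma integrable_of_bdd {α : Type*} [MeasurableSpace α] {μ : Measure α}
    [IsFiniteMeasure μ] {f : α → ℝ} {C : ℝ} (hm : Measurable f) (hb : ∀ x, |f x| ≤ C) :
    Integrable f μ :=
  (integrable_const C).mono' hm.aestronglyMeasurable
    (Filter.Eventually.of_forall (by simpa [Real.norm_eq_abs] using hb))

private lemma abs_mul_le_one {a b : ℝ} (ha : |a| ≤ 1) (hb : |b| ≤ 1) : |a * b| ≤ 1 := by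
  rw [abs_mul]; exact mul_le_one₀ ha (abs_nonneg _) hb

private lemma measurable_cons' {n : ℕ} :
    Measurable (fun p : I × (Fin n → I) => (Fin.cons p.1 p.2 : Fin (n+1) → I)) := by
  refine measurable_pi_iff.mpr fun i => ?_
  refine Fin.cases ?_ (fun j => ?_) i
  · simpa using measurable_fst
  · simp only [Fin.cons_succ]; exact (measurable_pi_apply j).comp measurable_snd

private lemma peel {n : ℕ} (f : (Fin (n+1) → I) → ℝ) (hm : Measurable f) {C : ℝ}
    (hb : ∀ x, |f x| ≤ C) :
    ∫ x, f x = ∫ a : I, ∫ y : Fin n → I, f (Fin.cons a y) := by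
  have h := measurePreserving_piFinSuccAbove (fun _ : Fin (n+1) => (volume : Measure I)) 0
  set e := MeasurableEquiv.piFinSuccAbove (fun _ : Fin (n+1) => I) 0 with he
  have hint : Integrable (fun p : I × (Fin n → I) => f (Fin.cons p.1 p.2))
      ((volume : Measure I).prod (Measure.pi fun _ => volume)) :=
    integrable_of_bdd (hm.comp measurable_cons') (fun p => hb _)
  have h2 : (∫ a : I, ∫ y : Fin n → I, f (Fin.cons a y)) =
      ∫ p : I × (Fin n → I), f (Fin.cons p.1 p.2)
        ∂((volume : Measure I).prod (Measure.pi fun _ => volume)) := by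
    rw [MeasureTheory.integral_prod _ hint]
    rfl
  rw [h2, ← h.map_eq, integral_map_equiv]
  congr 1
  funext x
  congr 1
  rw [show (Fin.cons (e x).1 (e x).2 : Fin (n+1) → I) = Fin.cons (x 0) (fun j => x j.succ) by rfl]
  exact (Fin.cons_self_tail x).symm

private lemma intc (r : ℝ) : (∫ _ : I, r) = r := by simp

private lemma int0 (r : ℝ) : (∫ _ : Fin 0 → I, r) = r := by simp

private lemma c41 (a : I) (y : Fin 3 → I) : (Fin.cons a y : Fin 4 → I) 1 = y 0 := rfl
private lemma c42 (a : I) (y : Fin 3 → I) : (Fin.cons a y : Fin 4 → I) 2 = y 1 := rfl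
private lemma c43 (a : I) (y : Fin 3 → I) : (Fin.cons a y : Fin 4 → I) 3 = y 2 := rfl
private lemma c31 (a : I) (y : Fin 2 → I) : (Fin.cons a y : Fin 3 → I) 1 = y 0 := rfl
private lemma c32 (a : I) (y : Fin 2 → I) : (Fin.cons a y : Fin 3 → I) 2 = y 1 := rfl
private lemma c21 (a : I) (y : Fin 1 → I) : (Fin.cons a y : Fin 2 → I) 1 = y 0 := rfl

private lemma nest4 (f : I → I → I → I → ℝ)
    (hmf : Measurable fun p : I × I × I × I => f p.1 p.2.1 p.2.2.1 p.2.2.2) {C : ℝ}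
    (hbf : ∀ a b c d, |f a b c d| ≤ C) :
    ∫ x : Fin 4 → I, f (x 0) (x 1) (x 2) (x 3) = ∫ a, ∫ b, ∫ c, ∫ d, f a b c d := by
  rw [peel (fun x : Fin 4 → I => f (x 0) (x 1) (x 2) (x 3)) (by fun_prop)
      (fun x => hbf _ _ _ _)]
  simp only [Fin.cons_zero, c41, c42, c43]
  have h3 : ∀ a : I, (∫ y : Fin 3 → I, f a (y 0) (y 1) (y 2))
      = ∫ b, ∫ z : Fin 2 → I, f a b (z 0) (z 1) := by
    intro a
    rw [peel (fun y : Fin 3 → I => f a (y 0) (y 1) (y 2)) (by fun_prop)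
        (fun y => hbf _ _ _ _)]
    simp only [Fin.cons_zero, c31, c32]
  simp only [h3]
  have h2 : ∀ a b : I, (∫ z : Fin 2 → I, f a b (z 0) (z 1))
      = ∫ c, ∫ w : Fin 1 → I, f a b c (w 0) := by
    intro a b
    rw [peel (fun z : Fin 2 → I => f a b (z 0) (z 1)) (by fun_prop)
        (fun z => hbf _ _ _ _)]
    simp only [Fin.cons_zero, c21]
  simp only [h2]
  have h1 : ∀ a b c : I, (∫ w : Fin 1 → I, f a b c (w 0)) = ∫ d, f a b c d := by
    intro a b c
    rw [peel (fun w : Fin 1 → I => f a b c (w 0)) (by fun_prop) (fun w => hbf _ _ _ _)]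
    congr 1
    funext d
    simp only [Fin.cons_zero]
    exact int0 _
  simp only [h1]

/-- Bounded symmetric measurable kernel. -/
private structure Ker (U : I → I → ℝ) : Prop where
  meas : Measurable fun p : I × I => U p.1 p.2
  symm : ∀ x y, U x y = U y x
  bdd : ∀ x y, |U x y| ≤ 1

noncomputable def deg (U : I → I → ℝ) : I → ℝ := fun x => ∫ y, U x y
noncomputable def FF (U : I → I → ℝ) : I → I → ℝ := fun x y => ∫ v, U x v * U v y
noncomputable def kk (U : I → I → ℝ) : ℝ := ∫ x, deg U x
noncomputable def pp (U : I → I → ℝ) : ℝ := ∫ x, deg U x * deg U x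
noncomputable def qq (U : I → I → ℝ) : ℝ := ∫ x, ∫ y, FF U x y * FF U x y
noncomputable def ss1 (U : I → I → ℝ) : ℝ := ∫ a, ∫ b, deg U b * (U a b * FF U a b)
noncomputable def ss2 (U : I → I → ℝ) : ℝ := ∫ a, ∫ b, deg U a * (U a b * FF U a b)

section KerLemmas

variable {U : I → I → ℝ}

private lemma deg_meas (hK : Ker U) : Measurable (deg U) :=
  (hK.meas.stronglyMeasurable.integral_prod_right').measurable

private lemma deg_bdd (hK : Ker U) : ∀ x, |deg U x| ≤ 1 := by
  intro x
  have h := norm_integral_le_of_norm_le_const (μ := (volume : Measure I))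
    (f := fun y => U x y) (C := 1)
    (Filter.Eventually.of_forall fun y => by simpa [Real.norm_eq_abs] using hK.bdd x y)
  simpa [Real.norm_eq_abs, measure_univ, deg] using h

private lemma FF_meas (hK : Ker U) : Measurable fun p : I × I => FF U p.1 p.2 := by
  have hm := hK.meas
  have : StronglyMeasurable fun q : (I × I) × I => U q.1.1 q.2 * U q.2 q.1.2 :=
    (by fun_prop : Measurable fun q : (I × I) × I => U q.1.1 q.2 * U q.2 q.1.2).stronglyMeasurable
  exact this.integral_prod_right'.measurable

private lemma FF_bdd (hK : Ker U) : ∀ x y, |FF U x y| ≤ 1 := by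
  intro x y
  have h := norm_integral_le_of_norm_le_const (μ := (volume : Measure I))
    (f := fun v => U x v * U v y) (C := 1)
    (Filter.Eventually.of_forall fun v => by
      simpa [Real.norm_eq_abs, abs_mul] using abs_mul_le_one (hK.bdd x v) (hK.bdd v y))
  simpa [Real.norm_eq_abs, measure_univ, FF] using h

private lemma FF_symm (hK : Ker U) (x y : I) : FF U x y = FF U y x := by
  unfold FF
  congr 1
  funext v
  rw [hK.symm x v, hK.symm v y]
  ring

private lemma degL (hK : Ker U) (b : I) : (∫ a : I, U a b) = deg U b := by
  rw [show (fun a => U a b) = fun a => U b a from funext fun a => hK.symm a b]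
  rfl

private lemma pp_nonneg (hK : Ker U) : 0 ≤ pp U :=
  integral_nonneg fun x => mul_self_nonneg _

private lemma qq_nonneg (hK : Ker U) : 0 ≤ qq U :=
  integral_nonneg fun x => integral_nonneg fun y => mul_self_nonneg _

private lemma integrable2 {f : I → I → ℝ} {C : ℝ}
    (hmf : Measurable fun p : I × I => f p.1 p.2) (hbf : ∀ x y, |f x y| ≤ C) :
    Integrable (Function.uncurry f) ((volume : Measure I).prod volume) :=
  integrable_of_bdd hmf fun p => hbf p.1 p.2

private lemma H1 (hK : Ker U) : (∫ a : I, ∫ b : I, U a b * deg U b) = pp U := by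
  have hm := hK.meas
  have hdm := deg_meas hK
  rw [integral_integral_swap (integrable2 (f := fun a b => U a b * deg U b) (by fun_prop)
      (fun a b => abs_mul_le_one (hK.bdd a b) (deg_bdd hK b)))]
  have e1 : ∀ b : I, (∫ a, U a b * deg U b) = deg U b * deg U b := by
    intro b
    rw [integral_mul_const, degL hK]
  simp only [e1]
  rfl

private lemma H2 (hK : Ker U) : (∫ a : I, ∫ b : I, U a b * deg U a) = pp U := by
  have e1 : ∀ a : I, (∫ b, U a b * deg U a) = deg U a * deg U a := by
    intro a
    rw [integral_mul_const]
    rfl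
  simp only [e1]
  rfl

private lemma H3 (hK : Ker U) : (∫ a : I, ∫ b : I, FF U a b) = pp U := by
  have hm := hK.meas
  have e1 : ∀ a : I, (∫ b, FF U a b) = ∫ v, U a v * deg U v := by
    intro a
    have e0 : ∀ b : I, FF U a b = ∫ v, U a v * U v b := fun _ => rfl
    simp only [e0]
    rw [integral_integral_swap (integrable2 (f := fun b v => U a v * U v b) (by fun_prop)
        (fun b v => abs_mul_le_one (hK.bdd a v) (hK.bdd v b)))]
    have e2 : ∀ v : I, (∫ b, U a v * U v b) = U a v * deg U v := by
      intro v
      rw [integral_const_mul]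
      rfl
    simp only [e2]
  simp only [e1]
  exact H1 hK

end KerLemmas

section Terms

variable {U : I → I → ℝ}

private lemma bdd2 (hK : Ker U) (a b c d : I) : |U a b * U c d| ≤ 1 :=
  abs_mul_le_one (hK.bdd a b) (hK.bdd c d)

private lemma bdd4 (hK : Ker U) (a b c d e f g h : I) :
    |U a b * U c d * U e f * U g h| ≤ 1 :=
  abs_mul_le_one (abs_mul_le_one (bdd2 hK a b c d) (hK.bdd e f)) (hK.bdd g h)

private lemma trmA (hK : Ker U) :
    ∫ x : Fin 4 → I, U (x 0) (x 1) * U (x 1) (x 2) = pp U := by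
  have hm := hK.meas
  rw [nest4 (fun a b c _ => U a b * U b c) (by fun_prop) (fun a b c d => bdd2 hK a b b c)]
  have e2 : ∀ a b : I, (∫ c, U a b * U b c) = U a b * deg U b := fun a b => by
    rw [integral_const_mul]; rfl
  simp only [intc, e2]
  exact H1 hK

private lemma trmB (hK : Ker U) :
    ∫ x : Fin 4 → I, U (x 1) (x 2) * U (x 2) (x 3) = pp U := by
  have hm := hK.meas
  rw [nest4 (fun _ b c d => U b c * U c d) (by fun_prop) (fun a b c d => bdd2 hK b c c d)]
  have e1 : ∀ b c : I, (∫ d, U b c * U c d) = U b c * deg U c := fun b c => by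
    rw [integral_const_mul]; rfl
  simp only [e1, intc]
  exact H1 hK

private lemma trmC (hK : Ker U) :
    ∫ x : Fin 4 → I, U (x 2) (x 3) * U (x 3) (x 0) = pp U := by
  have hm := hK.meas
  have hFm := FF_meas hK
  rw [nest4 (fun a _ c d => U c d * U d a) (by fun_prop) (fun a b c d => bdd2 hK c d d a)]
  have e1 : ∀ a c : I, (∫ d, U c d * U d a) = FF U c a := fun _ _ => rfl
  simp only [e1, intc]
  rw [integral_integral_swap (integrable2 (f := fun a c => FF U c a) (by fun_prop)
      (fun a c => FF_bdd hK c a))]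
  exact H3 hK

private lemma trmD (hK : Ker U) :
    ∫ x : Fin 4 → I, U (x 3) (x 0) * U (x 0) (x 1) = pp U := by
  have hm := hK.meas
  rw [nest4 (fun a b _ d => U d a * U a b) (by fun_prop) (fun a b c d => bdd2 hK d a a b)]
  have e1 : ∀ a b : I, (∫ d : I, U d a * U a b) = deg U a * U a b := fun a b => by
    rw [integral_mul_const, degL hK]
  simp only [e1, intc]
  have e2 : ∀ a b : I, deg U a * U a b = U a b * deg U a := fun _ _ => mul_comm _ _
  simp only [e2]
  exact H2 hK

private lemma trmE (hK : Ker U) :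
    ∫ x : Fin 4 → I, U (x 0) (x 1) * U (x 2) (x 3) = kk U * kk U := by
  have hm := hK.meas
  rw [nest4 (fun a b c d => U a b * U c d) (by fun_prop) (fun a b c d => bdd2 hK a b c d)]
  have e1 : ∀ a b c : I, (∫ d, U a b * U c d) = U a b * deg U c := fun a b c => by
    rw [integral_const_mul]; rfl
  have e2 : ∀ a b : I, (∫ c, U a b * deg U c) = U a b * kk U := fun a b => by
    rw [integral_const_mul]; rfl
  have e3 : ∀ a : I, (∫ b, U a b * kk U) = deg U a * kk U := fun a => by
    rw [integral_mul_const]; rfl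
  simp only [e1, e2, e3]
  rw [integral_mul_const]
  rfl

private lemma trmF (hK : Ker U) :
    ∫ x : Fin 4 → I, U (x 1) (x 2) * U (x 3) (x 0) = kk U * kk U := by
  have hm := hK.meas
  rw [nest4 (fun a b c d => U b c * U d a) (by fun_prop) (fun a b c d => bdd2 hK b c d a)]
  have e1 : ∀ a b c : I, (∫ d, U b c * U d a) = U b c * deg U a := fun a b c => by
    rw [integral_const_mul, degL hK]
  have e2 : ∀ a b : I, (∫ c, U b c * deg U a) = deg U b * deg U a := fun a b => by
    rw [integral_mul_const]; rfl
  have e3 : ∀ a : I, (∫ b, deg U b * deg U a) = kk U * deg U a := fun a => by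
    rw [integral_mul_const]; rfl
  simp only [e1, e2, e3]
  rw [integral_const_mul]
  rfl

private lemma trmG (hK : Ker U) :
    ∫ x : Fin 4 → I, U (x 0) (x 1) * U (x 1) (x 2) * U (x 2) (x 3) * U (x 3) (x 0)
      = qq U := by
  have hm := hK.meas
  have hFm := FF_meas hK
  rw [nest4 (fun a b c d => U a b * U b c * U c d * U d a) (by fun_prop)
      (fun a b c d => bdd4 hK a b b c c d d a)]
  have p0 : ∀ a b c d : I,
      U a b * U b c * U c d * U d a = (U a b * U b c) * (U c d * U d a) := by
    intros; ring
  simp only [p0]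
  have e1 : ∀ a b c : I,
      (∫ d, (U a b * U b c) * (U c d * U d a)) = (U a b * U b c) * FF U c a :=
    fun a b c => by rw [integral_const_mul]; rfl
  simp only [e1]
  have sw : ∀ a : I, (∫ b : I, ∫ c : I, (U a b * U b c) * FF U c a)
      = ∫ c : I, ∫ b : I, (U a b * U b c) * FF U c a := fun a =>
    integral_integral_swap (integrable2 (f := fun b c => (U a b * U b c) * FF U c a)
      (by fun_prop)
      (fun b c => abs_mul_le_one (bdd2 hK a b b c) (FF_bdd hK c a)))
  simp only [sw]
  have e2 : ∀ a c : I, (∫ b, (U a b * U b c) * FF U c a) = FF U a c * FF U c a :=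
    fun a c => by rw [integral_mul_const]; rfl
  simp only [e2]
  have e3 : ∀ a c : I, FF U a c * FF U c a = FF U a c * FF U a c := fun a c => by
    rw [FF_symm hK c a]
  simp only [e3]
  rfl

end Terms

section DTerms

variable {U : I → I → ℝ}

private lemma dT1 (hK : Ker U) :
    ∫ x : Fin 4 → I, U (x 0) (x 1) * U (x 0) (x 2) = pp U := by
  have hm := hK.meas
  rw [nest4 (fun a b c _ => U a b * U a c) (by fun_prop) (fun a b c d => bdd2 hK a b a c)]
  have e2 : ∀ a b : I, (∫ c, U a b * U a c) = U a b * deg U a := fun a b => by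
    rw [integral_const_mul]; rfl
  simp only [intc, e2]
  exact H2 hK

private lemma dT2 (hK : Ker U) :
    ∫ x : Fin 4 → I, U (x 0) (x 1) * U (x 0) (x 3) = pp U := by
  have hm := hK.meas
  rw [nest4 (fun a b _ d => U a b * U a d) (by fun_prop) (fun a b c d => bdd2 hK a b a d)]
  have e1 : ∀ a b : I, (∫ d, U a b * U a d) = U a b * deg U a := fun a b => by
    rw [integral_const_mul]; rfl
  simp only [e1, intc]
  exact H2 hK

private lemma dT4 (hK : Ker U) :
    ∫ x : Fin 4 → I, U (x 0) (x 1) * U (x 1) (x 3) = pp U := by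
  have hm := hK.meas
  rw [nest4 (fun a b _ d => U a b * U b d) (by fun_prop) (fun a b c d => bdd2 hK a b b d)]
  have e1 : ∀ a b : I, (∫ d, U a b * U b d) = U a b * deg U b := fun a b => by
    rw [integral_const_mul]; rfl
  simp only [e1, intc]
  exact H1 hK

private lemma dT5 (hK : Ker U) :
    ∫ x : Fin 4 → I, U (x 0) (x 2) * U (x 0) (x 3) = pp U := by
  have hm := hK.meas
  rw [nest4 (fun a _ c d => U a c * U a d) (by fun_prop) (fun a b c d => bdd2 hK a c a d)]
  have e1 : ∀ a c : I, (∫ d, U a c * U a d) = U a c * deg U a := fun a c => by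
    rw [integral_const_mul]; rfl
  have e2 : ∀ a : I, (∫ c, U a c * deg U a) = deg U a * deg U a := fun a => by
    rw [integral_mul_const]; rfl
  simp only [e1, e2, intc]
  rfl

private lemma dT6 (hK : Ker U) :
    ∫ x : Fin 4 → I, U (x 0) (x 2) * U (x 1) (x 2) = pp U := by
  have hm := hK.meas
  rw [nest4 (fun a b c _ => U a c * U b c) (by fun_prop) (fun a b c d => bdd2 hK a c b c)]
  have e2 : ∀ a b : I, (∫ c, U a c * U b c) = FF U a b := by
    intro a b
    show _ = ∫ v, U a v * U v b
    congr 1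
    funext c
    rw [hK.symm b c]
  simp only [intc, e2]
  exact H3 hK

private lemma dT7 (hK : Ker U) :
    ∫ x : Fin 4 → I, U (x 0) (x 2) * U (x 1) (x 3) = kk U * kk U := by
  have hm := hK.meas
  rw [nest4 (fun a b c d => U a c * U b d) (by fun_prop) (fun a b c d => bdd2 hK a c b d)]
  have e1 : ∀ a b c : I, (∫ d, U a c * U b d) = U a c * deg U b := fun a b c => by
    rw [integral_const_mul]; rfl
  have e2 : ∀ a b : I, (∫ c, U a c * deg U b) = deg U a * deg U b := fun a b => by
    rw [integral_mul_const]; rfl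
  have e3 : ∀ a : I, (∫ b, deg U a * deg U b) = deg U a * kk U := fun a => by
    rw [integral_const_mul]; rfl
  simp only [e1, e2, e3]
  rw [integral_mul_const]
  rfl

private lemma dT8 (hK : Ker U) :
    ∫ x : Fin 4 → I, U (x 0) (x 3) * U (x 1) (x 2) = kk U * kk U := by
  have hm := hK.meas
  rw [nest4 (fun a b c d => U a d * U b c) (by fun_prop) (fun a b c d => bdd2 hK a d b c)]
  have e1 : ∀ a b c : I, (∫ d, U a d * U b c) = deg U a * U b c := fun a b c => by
    rw [integral_mul_const]; rfl
  have e2 : ∀ a b : I, (∫ c, deg U a * U b c) = deg U a * deg U b := fun a b => by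
    rw [integral_const_mul]; rfl
  have e3 : ∀ a : I, (∫ b, deg U a * deg U b) = deg U a * kk U := fun a => by
    rw [integral_const_mul]; rfl
  simp only [e1, e2, e3]
  rw [integral_mul_const]
  rfl

private lemma dT9 (hK : Ker U) :
    ∫ x : Fin 4 → I, U (x 0) (x 3) * U (x 1) (x 3) = pp U := by
  have hm := hK.meas
  rw [nest4 (fun a b _ d => U a d * U b d) (by fun_prop) (fun a b c d => bdd2 hK a d b d)]
  have e1 : ∀ a b : I, (∫ d, U a d * U b d) = FF U a b := by
    intro a b
    show _ = ∫ v, U a v * U v b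
    congr 1
    funext d
    rw [hK.symm b d]
  simp only [e1, intc]
  exact H3 hK

private lemma dT10 (hK : Ker U) :
    ∫ x : Fin 4 → I, U (x 1) (x 2) * U (x 1) (x 3) = pp U := by
  have hm := hK.meas
  rw [nest4 (fun _ b c d => U b c * U b d) (by fun_prop) (fun a b c d => bdd2 hK b c b d)]
  have e1 : ∀ b c : I, (∫ d, U b c * U b d) = U b c * deg U b := fun b c => by
    rw [integral_const_mul]; rfl
  have e2 : ∀ b : I, (∫ c, U b c * deg U b) = deg U b * deg U b := fun b => by
    rw [integral_mul_const]; rfl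
  simp only [e1, e2]
  have e3 : (∫ b : I, deg U b * deg U b) = pp U := rfl
  rw [e3, intc]

private lemma dT11 (hK : Ker U) :
    ∫ x : Fin 4 → I, U (x 0) (x 2) * U (x 0) (x 3) * U (x 1) (x 2) * U (x 1) (x 3)
      = qq U := by
  have hm := hK.meas
  have hFm := FF_meas hK
  rw [nest4 (fun a b c d => U a c * U a d * U b c * U b d) (by fun_prop)
      (fun a b c d => bdd4 hK a c a d b c b d)]
  have p0 : ∀ a b c d : I,
      U a c * U a d * U b c * U b d = (U a c * U c b) * (U a d * U d b) := by
    intro a b c d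
    rw [hK.symm c b, hK.symm d b]
    ring
  simp only [p0]
  have e1 : ∀ a b c : I,
      (∫ d, (U a c * U c b) * (U a d * U d b)) = (U a c * U c b) * FF U a b :=
    fun a b c => by rw [integral_const_mul]; rfl
  simp only [e1]
  have e2 : ∀ a b : I, (∫ c, (U a c * U c b) * FF U a b) = FF U a b * FF U a b :=
    fun a b => by rw [integral_mul_const]; rfl
  simp only [e2]
  rfl

private lemma dT12 (hK : Ker U) :
    ∫ x : Fin 4 → I, U (x 0) (x 1) * U (x 0) (x 3) * U (x 1) (x 2) * U (x 1) (x 3)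
      = ss1 U := by
  have hm := hK.meas
  have hFm := FF_meas hK
  rw [nest4 (fun a b c d => U a b * U a d * U b c * U b d) (by fun_prop)
      (fun a b c d => bdd4 hK a b a d b c b d)]
  have p0 : ∀ a b c d : I,
      U a b * U a d * U b c * U b d = (U a b * U b c) * (U a d * U d b) := by
    intro a b c d
    rw [hK.symm d b]
    ring
  simp only [p0]
  have e1 : ∀ a b c : I,
      (∫ d, (U a b * U b c) * (U a d * U d b)) = (U a b * U b c) * FF U a b :=
    fun a b c => by rw [integral_const_mul]; rfl
  simp only [e1]
  have p1 : ∀ a b c : I,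
      (U a b * U b c) * FF U a b = U b c * (U a b * FF U a b) := by
    intros; ring
  simp only [p1]
  have e2 : ∀ a b : I, (∫ c, U b c * (U a b * FF U a b))
      = deg U b * (U a b * FF U a b) := fun a b => by rw [integral_mul_const]; rfl
  simp only [e2]
  rfl

private lemma dT13 (hK : Ker U) :
    ∫ x : Fin 4 → I, U (x 0) (x 1) * U (x 0) (x 2) * U (x 1) (x 2) * U (x 1) (x 3)
      = ss1 U := by
  have hm := hK.meas
  have hFm := FF_meas hK
  rw [nest4 (fun a b c d => U a b * U a c * U b c * U b d) (by fun_prop)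
      (fun a b c d => bdd4 hK a b a c b c b d)]
  have p0 : ∀ a b c d : I,
      U a b * U a c * U b c * U b d = (U a b * (U a c * U c b)) * U b d := by
    intro a b c d
    rw [hK.symm c b]
    ring
  simp only [p0]
  have e1 : ∀ a b c : I,
      (∫ d, (U a b * (U a c * U c b)) * U b d)
        = (U a b * (U a c * U c b)) * deg U b :=
    fun a b c => by rw [integral_const_mul]; rfl
  simp only [e1]
  have p1 : ∀ a b c : I,
      (U a b * (U a c * U c b)) * deg U b = (U a c * U c b) * (U a b * deg U b) := by
    intros; ring
  simp only [p1]
  have e2 : ∀ a b : I, (∫ c, (U a c * U c b) * (U a b * deg U b))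
      = FF U a b * (U a b * deg U b) := fun a b => by rw [integral_mul_const]; rfl
  simp only [e2]
  have p2 : ∀ a b : I,
      FF U a b * (U a b * deg U b) = deg U b * (U a b * FF U a b) := by
    intros; ring
  simp only [p2]
  rfl

private lemma dT14 (hK : Ker U) :
    ∫ x : Fin 4 → I, U (x 0) (x 1) * U (x 0) (x 2) * U (x 0) (x 3) * U (x 1) (x 3)
      = ss2 U := by
  have hm := hK.meas
  have hFm := FF_meas hK
  rw [nest4 (fun a b c d => U a b * U a c * U a d * U b d) (by fun_prop)
      (fun a b c d => bdd4 hK a b a c a d b d)]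
  have p0 : ∀ a b c d : I,
      U a b * U a c * U a d * U b d = (U a b * U a c) * (U a d * U d b) := by
    intro a b c d
    rw [hK.symm d b]
    ring
  simp only [p0]
  have e1 : ∀ a b c : I,
      (∫ d, (U a b * U a c) * (U a d * U d b)) = (U a b * U a c) * FF U a b :=
    fun a b c => by rw [integral_const_mul]; rfl
  simp only [e1]
  have p1 : ∀ a b c : I,
      (U a b * U a c) * FF U a b = U a c * (U a b * FF U a b) := by
    intros; ring
  simp only [p1]
  have e2 : ∀ a b : I, (∫ c, U a c * (U a b * FF U a b))
      = deg U a * (U a b * FF U a b) := fun a b => by rw [integral_mul_const]; rfl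
  simp only [e2]
  rfl

private lemma dT15 (hK : Ker U) :
    ∫ x : Fin 4 → I, U (x 0) (x 1) * U (x 0) (x 2) * U (x 0) (x 3) * U (x 1) (x 2)
      = ss2 U := by
  have hm := hK.meas
  have hFm := FF_meas hK
  rw [nest4 (fun a b c d => U a b * U a c * U a d * U b c) (by fun_prop)
      (fun a b c d => bdd4 hK a b a c a d b c)]
  have p0 : ∀ a b c d : I,
      U a b * U a c * U a d * U b c = (U a b * (U a c * U c b)) * U a d := by
    intro a b c d
    rw [hK.symm c b]
    ring
  simp only [p0]
  have e1 : ∀ a b c : I,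
      (∫ d, (U a b * (U a c * U c b)) * U a d)
        = (U a b * (U a c * U c b)) * deg U a :=
    fun a b c => by rw [integral_const_mul]; rfl
  simp only [e1]
  have p1 : ∀ a b c : I,
      (U a b * (U a c * U c b)) * deg U a = (U a c * U c b) * (U a b * deg U a) := by
    intros; ring
  simp only [p1]
  have e2 : ∀ a b : I, (∫ c, (U a c * U c b) * (U a b * deg U a))
      = FF U a b * (U a b * deg U a) := fun a b => by rw [integral_mul_const]; rfl
  simp only [e2]
  have p2 : ∀ a b : I,
      FF U a b * (U a b * deg U a) = deg U a * (U a b * FF U a b) := by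
    intros; ring
  simp only [p2]
  rfl

end DTerms

private lemma cauchy {α : Type*} [MeasurableSpace α] {μ : Measure α} {f g : α → ℝ}
    (hff : Integrable (fun x => f x * f x) μ) (hgg : Integrable (fun x => g x * g x) μ)
    (hfg : Integrable (fun x => f x * g x) μ) :
    (∫ x, f x * g x ∂μ) * (∫ x, f x * g x ∂μ)
      ≤ (∫ x, f x * f x ∂μ) * ∫ x, g x * g x ∂μ := by
  have key : ∀ t : ℝ, 0 ≤ (∫ x, f x * f x ∂μ) * (t * t)
      + (2 * ∫ x, f x * g x ∂μ) * t + ∫ x, g x * g x ∂μ := by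
    intro t
    have h0 : 0 ≤ ∫ x, (t * f x + g x) * (t * f x + g x) ∂μ :=
      integral_nonneg fun x => mul_self_nonneg _
    have e : ∫ x, (t * f x + g x) * (t * f x + g x) ∂μ
        = (∫ x, f x * f x ∂μ) * (t * t) + (2 * ∫ x, f x * g x ∂μ) * t
          + ∫ x, g x * g x ∂μ := by
      have e0 : (fun x => (t * f x + g x) * (t * f x + g x))
          = fun x => (t * t) * (f x * f x) + ((2 * t) * (f x * g x) + g x * g x) := by
        funext x; ring
      have hA : Integrable (fun x => (t * t) * (f x * f x)) μ := hff.const_mul _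
      have hB : Integrable (fun x => (2 * t) * (f x * g x)) μ := hfg.const_mul _
      have hBC : Integrable (fun x => (2 * t) * (f x * g x) + g x * g x) μ := hB.add hgg
      rw [e0, integral_add hA hBC, integral_add hB hgg, integral_const_mul,
          integral_const_mul]
      ring
    linarith [e ▸ h0]
  have hd := discrim_le_zero key
  rw [discrim] at hd
  nlinarith [hd]

section SSbounds

variable {U : I → I → ℝ}

private lemma ss1_sq (hK : Ker U) : ss1 U * ss1 U ≤ qq U * pp U := by
  have hm := hK.meas
  have hFm := FF_meas hK
  have hdm := deg_meas hK
  have hint1 : Integrable (Function.uncurry fun a b => deg U b * (U a b * FF U a b))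
      ((volume : Measure I).prod volume) :=
    integrable2 (by fun_prop) (fun a b => abs_mul_le_one (deg_bdd hK b)
      (abs_mul_le_one (hK.bdd a b) (FF_bdd hK a b)))
  have e0 : ss1 U = ∫ z : I × I, deg U z.2 * (U z.1 z.2 * FF U z.1 z.2)
      ∂((volume : Measure I).prod volume) := integral_integral hint1
  have e0' : ss1 U = ∫ z : I × I, FF U z.1 z.2 * (deg U z.2 * U z.1 z.2)
      ∂((volume : Measure I).prod volume) := by
    rw [e0]; congr 1; funext z; ring
  have hGG : Integrable (fun z : I × I => FF U z.1 z.2 * FF U z.1 z.2)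
      ((volume : Measure I).prod volume) :=
    integrable_of_bdd (by fun_prop)
      (fun z => abs_mul_le_one (FF_bdd hK _ _) (FF_bdd hK _ _))
  have hHH : Integrable (fun z : I × I => (deg U z.2 * U z.1 z.2) * (deg U z.2 * U z.1 z.2))
      ((volume : Measure I).prod volume) :=
    integrable_of_bdd (by fun_prop)
      (fun z => abs_mul_le_one (abs_mul_le_one (deg_bdd hK _) (hK.bdd _ _))
        (abs_mul_le_one (deg_bdd hK _) (hK.bdd _ _)))
  have hGH : Integrable (fun z : I × I => FF U z.1 z.2 * (deg U z.2 * U z.1 z.2))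
      ((volume : Measure I).prod volume) :=
    integrable_of_bdd (by fun_prop)
      (fun z => abs_mul_le_one (FF_bdd hK _ _)
        (abs_mul_le_one (deg_bdd hK _) (hK.bdd _ _)))
  have ecs := cauchy hGG hHH hGH
  have eG : (∫ z : I × I, FF U z.1 z.2 * FF U z.1 z.2
      ∂((volume : Measure I).prod volume)) = qq U :=
    (integral_integral (integrable2 (f := fun a b => FF U a b * FF U a b) (by fun_prop)
      (fun a b => abs_mul_le_one (FF_bdd hK a b) (FF_bdd hK a b)))).symm
  have hDD : Integrable (fun z : I × I => deg U z.2 * deg U z.2)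
      ((volume : Measure I).prod volume) :=
    integrable_of_bdd (by fun_prop)
      (fun z => abs_mul_le_one (deg_bdd hK _) (deg_bdd hK _))
  have eH : (∫ z : I × I, (deg U z.2 * U z.1 z.2) * (deg U z.2 * U z.1 z.2)
      ∂((volume : Measure I).prod volume)) ≤ pp U := by
    have mono := integral_mono hHH hDD (fun z => by
      have hu := abs_le.mp (hK.bdd z.1 z.2)
      have h1 : 0 ≤ deg U z.2 * deg U z.2 * ((1 - U z.1 z.2) * (1 + U z.1 z.2)) :=
        mul_nonneg (mul_self_nonneg _)
          (mul_nonneg (by linarith [hu.2]) (by linarith [hu.1]))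
      nlinarith [h1])
    have eDD : (∫ z : I × I, deg U z.2 * deg U z.2
        ∂((volume : Measure I).prod volume)) = pp U := by
      rw [MeasureTheory.integral_prod _ hDD]
      have e1 : ∀ x : I, (∫ y : I, deg U (x, y).2 * deg U (x, y).2) = pp U :=
        fun x => rfl
      simp only [e1]
      exact intc _
    linarith
  calc ss1 U * ss1 U
      = (∫ z : I × I, FF U z.1 z.2 * (deg U z.2 * U z.1 z.2)
          ∂((volume : Measure I).prod volume))
        * ∫ z : I × I, FF U z.1 z.2 * (deg U z.2 * U z.1 z.2)
          ∂((volume : Measure I).prod volume) := by rw [← e0']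
    _ ≤ (∫ z : I × I, FF U z.1 z.2 * FF U z.1 z.2
          ∂((volume : Measure I).prod volume))
        * ∫ z : I × I, (deg U z.2 * U z.1 z.2) * (deg U z.2 * U z.1 z.2)
          ∂((volume : Measure I).prod volume) := ecs
    _ = qq U * ∫ z : I × I, (deg U z.2 * U z.1 z.2) * (deg U z.2 * U z.1 z.2)
          ∂((volume : Measure I).prod volume) := by rw [eG]
    _ ≤ qq U * pp U := mul_le_mul_of_nonneg_left eH (qq_nonneg hK)

private lemma ss2_sq (hK : Ker U) : ss2 U * ss2 U ≤ qq U * pp U := by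
  have hm := hK.meas
  have hFm := FF_meas hK
  have hdm := deg_meas hK
  have hint1 : Integrable (Function.uncurry fun a b => deg U a * (U a b * FF U a b))
      ((volume : Measure I).prod volume) :=
    integrable2 (by fun_prop) (fun a b => abs_mul_le_one (deg_bdd hK a)
      (abs_mul_le_one (hK.bdd a b) (FF_bdd hK a b)))
  have e0 : ss2 U = ∫ z : I × I, deg U z.1 * (U z.1 z.2 * FF U z.1 z.2)
      ∂((volume : Measure I).prod volume) := integral_integral hint1
  have e0' : ss2 U = ∫ z : I × I, FF U z.1 z.2 * (deg U z.1 * U z.1 z.2)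
      ∂((volume : Measure I).prod volume) := by
    rw [e0]; congr 1; funext z; ring
  have hGG : Integrable (fun z : I × I => FF U z.1 z.2 * FF U z.1 z.2)
      ((volume : Measure I).prod volume) :=
    integrable_of_bdd (by fun_prop)
      (fun z => abs_mul_le_one (FF_bdd hK _ _) (FF_bdd hK _ _))
  have hHH : Integrable (fun z : I × I => (deg U z.1 * U z.1 z.2) * (deg U z.1 * U z.1 z.2))
      ((volume : Measure I).prod volume) :=
    integrable_of_bdd (by fun_prop)
      (fun z => abs_mul_le_one (abs_mul_le_one (deg_bdd hK _) (hK.bdd _ _))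
        (abs_mul_le_one (deg_bdd hK _) (hK.bdd _ _)))
  have hGH : Integrable (fun z : I × I => FF U z.1 z.2 * (deg U z.1 * U z.1 z.2))
      ((volume : Measure I).prod volume) :=
    integrable_of_bdd (by fun_prop)
      (fun z => abs_mul_le_one (FF_bdd hK _ _)
        (abs_mul_le_one (deg_bdd hK _) (hK.bdd _ _)))
  have ecs := cauchy hGG hHH hGH
  have eG : (∫ z : I × I, FF U z.1 z.2 * FF U z.1 z.2
      ∂((volume : Measure I).prod volume)) = qq U :=
    (integral_integral (integrable2 (f := fun a b => FF U a b * FF U a b) (by fun_prop)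
      (fun a b => abs_mul_le_one (FF_bdd hK a b) (FF_bdd hK a b)))).symm
  have hDD : Integrable (fun z : I × I => deg U z.1 * deg U z.1)
      ((volume : Measure I).prod volume) :=
    integrable_of_bdd (by fun_prop)
      (fun z => abs_mul_le_one (deg_bdd hK _) (deg_bdd hK _))
  have eH : (∫ z : I × I, (deg U z.1 * U z.1 z.2) * (deg U z.1 * U z.1 z.2)
      ∂((volume : Measure I).prod volume)) ≤ pp U := by
    have mono := integral_mono hHH hDD (fun z => by
      have hu := abs_le.mp (hK.bdd z.1 z.2)
      have h1 : 0 ≤ deg U z.1 * deg U z.1 * ((1 - U z.1 z.2) * (1 + U z.1 z.2)) :=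
        mul_nonneg (mul_self_nonneg _)
          (mul_nonneg (by linarith [hu.2]) (by linarith [hu.1]))
      nlinarith [h1])
    have eDD : (∫ z : I × I, deg U z.1 * deg U z.1
        ∂((volume : Measure I).prod volume)) = pp U := by
      rw [MeasureTheory.integral_prod _ hDD]
      have e1 : ∀ x : I, (∫ y : I, deg U (x, y).1 * deg U (x, y).1)
          = deg U x * deg U x := fun x => by
        show (∫ _ : I, deg U x * deg U x) = _
        exact intc _
      simp only [e1]
      rfl
    linarith
  calc ss2 U * ss2 U
      = (∫ z : I × I, FF U z.1 z.2 * (deg U z.1 * U z.1 z.2)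
          ∂((volume : Measure I).prod volume))
        * ∫ z : I × I, FF U z.1 z.2 * (deg U z.1 * U z.1 z.2)
          ∂((volume : Measure I).prod volume) := by rw [← e0']
    _ ≤ (∫ z : I × I, FF U z.1 z.2 * FF U z.1 z.2
          ∂((volume : Measure I).prod volume))
        * ∫ z : I × I, (deg U z.1 * U z.1 z.2) * (deg U z.1 * U z.1 z.2)
          ∂((volume : Measure I).prod volume) := ecs
    _ = qq U * ∫ z : I × I, (deg U z.1 * U z.1 z.2) * (deg U z.1 * U z.1 z.2)
          ∂((volume : Measure I).prod volume) := by rw [eG]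
    _ ≤ qq U * pp U := mul_le_mul_of_nonneg_left eH (qq_nonneg hK)

end SSbounds

section Expand

variable {W U : I → I → ℝ}

private lemma expC4 (hG : IsGraphon W) (hK : Ker U)
    (hWU : ∀ x y, W x y = (1 + U x y) / 2) :
    tC4 W + tC4 (compl' W)
      = (1 + (4 * pp U + 2 * (kk U * kk U)) + qq U) / 8 := by
  have hm := hK.meas
  have hWm := hG.1
  have hWb : ∀ x y, |W x y| ≤ 1 := fun x y =>
    abs_le.mpr ⟨by linarith [hG.2.2.1 x y], hG.2.2.2 x y⟩
  have hWm' : Measurable fun p : I × I => compl' W p.1 p.2 :=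
    measurable_const.sub hWm
  have hWb' : ∀ x y, |compl' W x y| ≤ 1 := fun x y => abs_le.mpr
    ⟨by simp only [compl']; linarith [hG.2.2.2 x y],
     by simp only [compl']; linarith [hG.2.2.1 x y]⟩
  have IW : Integrable (fun x : Fin 4 → I =>
      W (x 0) (x 1) * W (x 1) (x 2) * W (x 2) (x 3) * W (x 3) (x 0)) volume :=
    integrable_of_bdd (C := 1) (by fun_prop) (fun x =>
      abs_mul_le_one (abs_mul_le_one (abs_mul_le_one (hWb _ _) (hWb _ _)) (hWb _ _))
        (hWb _ _))
  have IW' : Integrable (fun x : Fin 4 → I =>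
      compl' W (x 0) (x 1) * compl' W (x 1) (x 2) * compl' W (x 2) (x 3)
        * compl' W (x 3) (x 0)) volume :=
    integrable_of_bdd (C := 1) (by fun_prop) (fun x =>
      abs_mul_le_one (abs_mul_le_one (abs_mul_le_one (hWb' _ _) (hWb' _ _)) (hWb' _ _))
        (hWb' _ _))
  simp only [tC4]
  rw [← integral_add IW IW']
  have key : (fun x : Fin 4 → I =>
        W (x 0) (x 1) * W (x 1) (x 2) * W (x 2) (x 3) * W (x 3) (x 0)
        + compl' W (x 0) (x 1) * compl' W (x 1) (x 2) * compl' W (x 2) (x 3)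
          * compl' W (x 3) (x 0))
      = fun x : Fin 4 → I => (1/8 : ℝ) *
        (1 + (U (x 0) (x 1) * U (x 1) (x 2) + U (x 1) (x 2) * U (x 2) (x 3)
          + U (x 2) (x 3) * U (x 3) (x 0) + U (x 3) (x 0) * U (x 0) (x 1)
          + U (x 0) (x 1) * U (x 2) (x 3) + U (x 1) (x 2) * U (x 3) (x 0))
        + U (x 0) (x 1) * U (x 1) (x 2) * U (x 2) (x 3) * U (x 3) (x 0)) := by
    funext x
    simp only [compl', hWU]
    ring
  rw [key, integral_const_mul]
  have i1 : Integrable (fun x : Fin 4 → I => U (x 0) (x 1) * U (x 1) (x 2)) volume :=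
    integrable_of_bdd (by fun_prop) (fun x => bdd2 hK _ _ _ _)
  have i2 : Integrable (fun x : Fin 4 → I => U (x 1) (x 2) * U (x 2) (x 3)) volume :=
    integrable_of_bdd (by fun_prop) (fun x => bdd2 hK _ _ _ _)
  have i3 : Integrable (fun x : Fin 4 → I => U (x 2) (x 3) * U (x 3) (x 0)) volume :=
    integrable_of_bdd (by fun_prop) (fun x => bdd2 hK _ _ _ _)
  have i4 : Integrable (fun x : Fin 4 → I => U (x 3) (x 0) * U (x 0) (x 1)) volume :=
    integrable_of_bdd (by fun_prop) (fun x => bdd2 hK _ _ _ _)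
  have i5 : Integrable (fun x : Fin 4 → I => U (x 0) (x 1) * U (x 2) (x 3)) volume :=
    integrable_of_bdd (by fun_prop) (fun x => bdd2 hK _ _ _ _)
  have i6 : Integrable (fun x : Fin 4 → I => U (x 1) (x 2) * U (x 3) (x 0)) volume :=
    integrable_of_bdd (by fun_prop) (fun x => bdd2 hK _ _ _ _)
  have i7 : Integrable (fun x : Fin 4 → I =>
      U (x 0) (x 1) * U (x 1) (x 2) * U (x 2) (x 3) * U (x 3) (x 0)) volume :=
    integrable_of_bdd (by fun_prop) (fun x => bdd4 hK _ _ _ _ _ _ _ _)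
  have s2 : Integrable (fun x : Fin 4 → I =>
      U (x 0) (x 1) * U (x 1) (x 2) + U (x 1) (x 2) * U (x 2) (x 3)) volume := i1.add i2
  have s3 : Integrable (fun x : Fin 4 → I =>
      U (x 0) (x 1) * U (x 1) (x 2) + U (x 1) (x 2) * U (x 2) (x 3)
      + U (x 2) (x 3) * U (x 3) (x 0)) volume := s2.add i3
  have s4 : Integrable (fun x : Fin 4 → I =>
      U (x 0) (x 1) * U (x 1) (x 2) + U (x 1) (x 2) * U (x 2) (x 3)
      + U (x 2) (x 3) * U (x 3) (x 0) + U (x 3) (x 0) * U (x 0) (x 1)) volume := s3.add i4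
  have s5 : Integrable (fun x : Fin 4 → I =>
      U (x 0) (x 1) * U (x 1) (x 2) + U (x 1) (x 2) * U (x 2) (x 3)
      + U (x 2) (x 3) * U (x 3) (x 0) + U (x 3) (x 0) * U (x 0) (x 1)
      + U (x 0) (x 1) * U (x 2) (x 3)) volume := s4.add i5
  have s6 : Integrable (fun x : Fin 4 → I =>
      U (x 0) (x 1) * U (x 1) (x 2) + U (x 1) (x 2) * U (x 2) (x 3)
      + U (x 2) (x 3) * U (x 3) (x 0) + U (x 3) (x 0) * U (x 0) (x 1)
      + U (x 0) (x 1) * U (x 2) (x 3) + U (x 1) (x 2) * U (x 3) (x 0)) volume := s5.add i6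
  have s7 : Integrable (fun x : Fin 4 → I => (1:ℝ)
      + (U (x 0) (x 1) * U (x 1) (x 2) + U (x 1) (x 2) * U (x 2) (x 3)
      + U (x 2) (x 3) * U (x 3) (x 0) + U (x 3) (x 0) * U (x 0) (x 1)
      + U (x 0) (x 1) * U (x 2) (x 3) + U (x 1) (x 2) * U (x 3) (x 0))) volume :=
    (integrable_const 1).add s6
  rw [integral_add s7 i7, integral_add (integrable_const 1) s6, integral_add s5 i6,
      integral_add s4 i5, integral_add s3 i4, integral_add s2 i3, integral_add i1 i2,
      integral_const, trmA hK, trmB hK, trmC hK, trmD hK, trmE hK, trmF hK, trmG hK]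
  simp only [measure_univ, ENNReal.toReal_one, smul_eq_mul, one_mul, probReal_univ]
  ring

private lemma expD (hG : IsGraphon W) (hK : Ker U)
    (hWU : ∀ x y, W x y = (1 + U x y) / 2) :
    tD W + tD (compl' W)
      = (1 + (8 * pp U + 2 * (kk U * kk U)) + (qq U + 2 * ss1 U + 2 * ss2 U)) / 16 := by
  have hm := hK.meas
  have hWm := hG.1
  have hWb : ∀ x y, |W x y| ≤ 1 := fun x y =>
    abs_le.mpr ⟨by linarith [hG.2.2.1 x y], hG.2.2.2 x y⟩
  have hWm' : Measurable fun p : I × I => compl' W p.1 p.2 :=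
    measurable_const.sub hWm
  have hWb' : ∀ x y, |compl' W x y| ≤ 1 := fun x y => abs_le.mpr
    ⟨by simp only [compl']; linarith [hG.2.2.2 x y],
     by simp only [compl']; linarith [hG.2.2.1 x y]⟩
  have IW : Integrable (fun x : Fin 4 → I =>
      W (x 0) (x 1) * W (x 0) (x 2) * W (x 0) (x 3) * W (x 1) (x 2) * W (x 1) (x 3))
      volume :=
    integrable_of_bdd (C := 1) (by fun_prop) (fun x =>
      abs_mul_le_one (abs_mul_le_one (abs_mul_le_one (abs_mul_le_one (hWb _ _) (hWb _ _))
        (hWb _ _)) (hWb _ _)) (hWb _ _))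
  have IW' : Integrable (fun x : Fin 4 → I =>
      compl' W (x 0) (x 1) * compl' W (x 0) (x 2) * compl' W (x 0) (x 3)
        * compl' W (x 1) (x 2) * compl' W (x 1) (x 3)) volume :=
    integrable_of_bdd (C := 1) (by fun_prop) (fun x =>
      abs_mul_le_one (abs_mul_le_one (abs_mul_le_one (abs_mul_le_one (hWb' _ _) (hWb' _ _))
        (hWb' _ _)) (hWb' _ _)) (hWb' _ _))
  simp only [tD]
  rw [← integral_add IW IW']
  have key : (fun x : Fin 4 → I =>
        W (x 0) (x 1) * W (x 0) (x 2) * W (x 0) (x 3) * W (x 1) (x 2) * W (x 1) (x 3)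
        + compl' W (x 0) (x 1) * compl' W (x 0) (x 2) * compl' W (x 0) (x 3)
          * compl' W (x 1) (x 2) * compl' W (x 1) (x 3))
      = fun x : Fin 4 → I => (1/16 : ℝ) *
        (1 + (U (x 0) (x 1) * U (x 0) (x 2) + U (x 0) (x 1) * U (x 0) (x 3)
          + U (x 0) (x 1) * U (x 1) (x 2) + U (x 0) (x 1) * U (x 1) (x 3)
          + U (x 0) (x 2) * U (x 0) (x 3) + U (x 0) (x 2) * U (x 1) (x 2)
          + U (x 0) (x 2) * U (x 1) (x 3) + U (x 0) (x 3) * U (x 1) (x 2)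
          + U (x 0) (x 3) * U (x 1) (x 3) + U (x 1) (x 2) * U (x 1) (x 3))
        + (U (x 0) (x 2) * U (x 0) (x 3) * U (x 1) (x 2) * U (x 1) (x 3)
          + U (x 0) (x 1) * U (x 0) (x 3) * U (x 1) (x 2) * U (x 1) (x 3)
          + U (x 0) (x 1) * U (x 0) (x 2) * U (x 1) (x 2) * U (x 1) (x 3)
          + U (x 0) (x 1) * U (x 0) (x 2) * U (x 0) (x 3) * U (x 1) (x 3)
          + U (x 0) (x 1) * U (x 0) (x 2) * U (x 0) (x 3) * U (x 1) (x 2))) := by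
    funext x
    simp only [compl', hWU]
    ring
  rw [key, integral_const_mul]
  have i1 : Integrable (fun x : Fin 4 → I => U (x 0) (x 1) * U (x 0) (x 2)) volume :=
    integrable_of_bdd (by fun_prop) (fun x => bdd2 hK _ _ _ _)
  have i2 : Integrable (fun x : Fin 4 → I => U (x 0) (x 1) * U (x 0) (x 3)) volume :=
    integrable_of_bdd (by fun_prop) (fun x => bdd2 hK _ _ _ _)
  have i3 : Integrable (fun x : Fin 4 → I => U (x 0) (x 1) * U (x 1) (x 2)) volume :=
    integrable_of_bdd (by fun_prop) (fun x => bdd2 hK _ _ _ _)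
  have i4 : Integrable (fun x : Fin 4 → I => U (x 0) (x 1) * U (x 1) (x 3)) volume :=
    integrable_of_bdd (by fun_prop) (fun x => bdd2 hK _ _ _ _)
  have i5 : Integrable (fun x : Fin 4 → I => U (x 0) (x 2) * U (x 0) (x 3)) volume :=
    integrable_of_bdd (by fun_prop) (fun x => bdd2 hK _ _ _ _)
  have i6 : Integrable (fun x : Fin 4 → I => U (x 0) (x 2) * U (x 1) (x 2)) volume :=
    integrable_of_bdd (by fun_prop) (fun x => bdd2 hK _ _ _ _)
  have i7 : Integrable (fun x : Fin 4 → I => U (x 0) (x 2) * U (x 1) (x 3)) volume :=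
    integrable_of_bdd (by fun_prop) (fun x => bdd2 hK _ _ _ _)
  have i8 : Integrable (fun x : Fin 4 → I => U (x 0) (x 3) * U (x 1) (x 2)) volume :=
    integrable_of_bdd (by fun_prop) (fun x => bdd2 hK _ _ _ _)
  have i9 : Integrable (fun x : Fin 4 → I => U (x 0) (x 3) * U (x 1) (x 3)) volume :=
    integrable_of_bdd (by fun_prop) (fun x => bdd2 hK _ _ _ _)
  have i10 : Integrable (fun x : Fin 4 → I => U (x 1) (x 2) * U (x 1) (x 3)) volume :=
    integrable_of_bdd (by fun_prop) (fun x => bdd2 hK _ _ _ _)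
  have j1 : Integrable (fun x : Fin 4 → I =>
      U (x 0) (x 2) * U (x 0) (x 3) * U (x 1) (x 2) * U (x 1) (x 3)) volume :=
    integrable_of_bdd (by fun_prop) (fun x => bdd4 hK _ _ _ _ _ _ _ _)
  have j2 : Integrable (fun x : Fin 4 → I =>
      U (x 0) (x 1) * U (x 0) (x 3) * U (x 1) (x 2) * U (x 1) (x 3)) volume :=
    integrable_of_bdd (by fun_prop) (fun x => bdd4 hK _ _ _ _ _ _ _ _)
  have j3 : Integrable (fun x : Fin 4 → I =>
      U (x 0) (x 1) * U (x 0) (x 2) * U (x 1) (x 2) * U (x 1) (x 3)) volume :=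
    integrable_of_bdd (by fun_prop) (fun x => bdd4 hK _ _ _ _ _ _ _ _)
  have j4 : Integrable (fun x : Fin 4 → I =>
      U (x 0) (x 1) * U (x 0) (x 2) * U (x 0) (x 3) * U (x 1) (x 3)) volume :=
    integrable_of_bdd (by fun_prop) (fun x => bdd4 hK _ _ _ _ _ _ _ _)
  have j5 : Integrable (fun x : Fin 4 → I =>
      U (x 0) (x 1) * U (x 0) (x 2) * U (x 0) (x 3) * U (x 1) (x 2)) volume :=
    integrable_of_bdd (by fun_prop) (fun x => bdd4 hK _ _ _ _ _ _ _ _)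
  have s2 : Integrable (fun x : Fin 4 → I =>
      U (x 0) (x 1) * U (x 0) (x 2) + U (x 0) (x 1) * U (x 0) (x 3)) volume := i1.add i2
  have s3 : Integrable (fun x : Fin 4 → I =>
      U (x 0) (x 1) * U (x 0) (x 2) + U (x 0) (x 1) * U (x 0) (x 3)
      + U (x 0) (x 1) * U (x 1) (x 2)) volume := s2.add i3
  have s4 : Integrable (fun x : Fin 4 → I =>
      U (x 0) (x 1) * U (x 0) (x 2) + U (x 0) (x 1) * U (x 0) (x 3)
      + U (x 0) (x 1) * U (x 1) (x 2) + U (x 0) (x 1) * U (x 1) (x 3)) volume := s3.add i4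
  have s5 : Integrable (fun x : Fin 4 → I =>
      U (x 0) (x 1) * U (x 0) (x 2) + U (x 0) (x 1) * U (x 0) (x 3)
      + U (x 0) (x 1) * U (x 1) (x 2) + U (x 0) (x 1) * U (x 1) (x 3)
      + U (x 0) (x 2) * U (x 0) (x 3)) volume := s4.add i5
  have s6 : Integrable (fun x : Fin 4 → I =>
      U (x 0) (x 1) * U (x 0) (x 2) + U (x 0) (x 1) * U (x 0) (x 3)
      + U (x 0) (x 1) * U (x 1) (x 2) + U (x 0) (x 1) * U (x 1) (x 3)
      + U (x 0) (x 2) * U (x 0) (x 3) + U (x 0) (x 2) * U (x 1) (x 2)) volume := s5.add i6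
  have s7 : Integrable (fun x : Fin 4 → I =>
      U (x 0) (x 1) * U (x 0) (x 2) + U (x 0) (x 1) * U (x 0) (x 3)
      + U (x 0) (x 1) * U (x 1) (x 2) + U (x 0) (x 1) * U (x 1) (x 3)
      + U (x 0) (x 2) * U (x 0) (x 3) + U (x 0) (x 2) * U (x 1) (x 2)
      + U (x 0) (x 2) * U (x 1) (x 3)) volume := s6.add i7
  have s8 : Integrable (fun x : Fin 4 → I =>
      U (x 0) (x 1) * U (x 0) (x 2) + U (x 0) (x 1) * U (x 0) (x 3)
      + U (x 0) (x 1) * U (x 1) (x 2) + U (x 0) (x 1) * U (x 1) (x 3)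
      + U (x 0) (x 2) * U (x 0) (x 3) + U (x 0) (x 2) * U (x 1) (x 2)
      + U (x 0) (x 2) * U (x 1) (x 3) + U (x 0) (x 3) * U (x 1) (x 2)) volume := s7.add i8
  have s9 : Integrable (fun x : Fin 4 → I =>
      U (x 0) (x 1) * U (x 0) (x 2) + U (x 0) (x 1) * U (x 0) (x 3)
      + U (x 0) (x 1) * U (x 1) (x 2) + U (x 0) (x 1) * U (x 1) (x 3)
      + U (x 0) (x 2) * U (x 0) (x 3) + U (x 0) (x 2) * U (x 1) (x 2)
      + U (x 0) (x 2) * U (x 1) (x 3) + U (x 0) (x 3) * U (x 1) (x 2)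
      + U (x 0) (x 3) * U (x 1) (x 3)) volume := s8.add i9
  have s10 : Integrable (fun x : Fin 4 → I =>
      U (x 0) (x 1) * U (x 0) (x 2) + U (x 0) (x 1) * U (x 0) (x 3)
      + U (x 0) (x 1) * U (x 1) (x 2) + U (x 0) (x 1) * U (x 1) (x 3)
      + U (x 0) (x 2) * U (x 0) (x 3) + U (x 0) (x 2) * U (x 1) (x 2)
      + U (x 0) (x 2) * U (x 1) (x 3) + U (x 0) (x 3) * U (x 1) (x 2)
      + U (x 0) (x 3) * U (x 1) (x 3) + U (x 1) (x 2) * U (x 1) (x 3)) volume := s9.add i10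
  have sP : Integrable (fun x : Fin 4 → I => (1:ℝ)
      + (U (x 0) (x 1) * U (x 0) (x 2) + U (x 0) (x 1) * U (x 0) (x 3)
      + U (x 0) (x 1) * U (x 1) (x 2) + U (x 0) (x 1) * U (x 1) (x 3)
      + U (x 0) (x 2) * U (x 0) (x 3) + U (x 0) (x 2) * U (x 1) (x 2)
      + U (x 0) (x 2) * U (x 1) (x 3) + U (x 0) (x 3) * U (x 1) (x 2)
      + U (x 0) (x 3) * U (x 1) (x 3) + U (x 1) (x 2) * U (x 1) (x 3))) volume :=
    (integrable_const 1).add s10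
  have t2 : Integrable (fun x : Fin 4 → I =>
      U (x 0) (x 2) * U (x 0) (x 3) * U (x 1) (x 2) * U (x 1) (x 3)
      + U (x 0) (x 1) * U (x 0) (x 3) * U (x 1) (x 2) * U (x 1) (x 3)) volume := j1.add j2
  have t3 : Integrable (fun x : Fin 4 → I =>
      U (x 0) (x 2) * U (x 0) (x 3) * U (x 1) (x 2) * U (x 1) (x 3)
      + U (x 0) (x 1) * U (x 0) (x 3) * U (x 1) (x 2) * U (x 1) (x 3)
      + U (x 0) (x 1) * U (x 0) (x 2) * U (x 1) (x 2) * U (x 1) (x 3)) volume := t2.add j3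
  have t4 : Integrable (fun x : Fin 4 → I =>
      U (x 0) (x 2) * U (x 0) (x 3) * U (x 1) (x 2) * U (x 1) (x 3)
      + U (x 0) (x 1) * U (x 0) (x 3) * U (x 1) (x 2) * U (x 1) (x 3)
      + U (x 0) (x 1) * U (x 0) (x 2) * U (x 1) (x 2) * U (x 1) (x 3)
      + U (x 0) (x 1) * U (x 0) (x 2) * U (x 0) (x 3) * U (x 1) (x 3)) volume := t3.add j4
  have t5 : Integrable (fun x : Fin 4 → I =>
      U (x 0) (x 2) * U (x 0) (x 3) * U (x 1) (x 2) * U (x 1) (x 3)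
      + U (x 0) (x 1) * U (x 0) (x 3) * U (x 1) (x 2) * U (x 1) (x 3)
      + U (x 0) (x 1) * U (x 0) (x 2) * U (x 1) (x 2) * U (x 1) (x 3)
      + U (x 0) (x 1) * U (x 0) (x 2) * U (x 0) (x 3) * U (x 1) (x 3)
      + U (x 0) (x 1) * U (x 0) (x 2) * U (x 0) (x 3) * U (x 1) (x 2)) volume := t4.add j5
  rw [integral_add sP t5, integral_add (integrable_const 1) s10,
      integral_add s9 i10, integral_add s8 i9, integral_add s7 i8, integral_add s6 i7,
      integral_add s5 i6, integral_add s4 i5, integral_add s3 i4, integral_add s2 i3,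
      integral_add i1 i2,
      integral_add t4 j5, integral_add t3 j4, integral_add t2 j3, integral_add j1 j2,
      integral_const,
      dT1 hK, dT2 hK, trmA hK, dT4 hK, dT5 hK, dT6 hK, dT7 hK, dT8 hK, dT9 hK, dT10 hK,
      dT11 hK, dT12 hK, dT13 hK, dT14 hK, dT15 hK]
  simp only [measure_univ, ENNReal.toReal_one, smul_eq_mul, one_mul, probReal_univ]
  ring


end Expand

set_option maxHeartbeats 1000000 in
/-- For `0 ≤ c ≤ (3-√5)/4` and every graphon `W`:
`m_D(W) - 1/16 ≥ c·(m_{C₄}(W) - 1/8)`, where `D` is the diamond. -/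
theorem diamond_vs_C4 (c : ℝ) (hc0 : 0 ≤ c) (hc1 : c ≤ (3 - Real.sqrt 5) / 4)
    (W : unitInterval → unitInterval → ℝ) (hW : IsGraphon W) :
    c * (tC4 W + tC4 (compl' W) - 1 / 8) ≤ tD W + tD (compl' W) - 1 / 16 := by
  obtain ⟨hWm, hWs, hW0, hW1⟩ := hW
  set U : I → I → ℝ := fun x y => 2 * W x y - 1 with hUdef
  have hK : Ker U := by
    refine ⟨by fun_prop, fun x y => by simp only [hUdef, hWs x y], fun x y => ?_⟩
    have h0 := hW0 x y
    have h1 := hW1 x y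
    simp only [hUdef]
    rw [abs_le]
    constructor <;> linarith
  have hWU : ∀ x y, W x y = (1 + U x y) / 2 := fun x y => by
    simp only [hUdef]; ring
  rw [expC4 ⟨hWm, hWs, hW0, hW1⟩ hK hWU, expD ⟨hWm, hWs, hW0, hW1⟩ hK hWU]
  have hp : 0 ≤ pp U := pp_nonneg hK
  have hq : 0 ≤ qq U := qq_nonneg hK
  have hs1 := ss1_sq hK
  have hs2 := ss2_sq hK
  have hKK : 0 ≤ kk U * kk U := mul_self_nonneg _
  set u := Real.sqrt (pp U) with hu
  set v := Real.sqrt (qq U) with hv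
  have hu2 : u * u = pp U := Real.mul_self_sqrt hp
  have hv2 : v * v = qq U := Real.mul_self_sqrt hq
  have hu0 : 0 ≤ u := Real.sqrt_nonneg _
  have hv0 : 0 ≤ v := Real.sqrt_nonneg _
  have hS1 : -(v * u) ≤ ss1 U := by
    nlinarith [hs1, sq_nonneg (ss1 U + v * u), mul_nonneg hv0 hu0, hu2, hv2,
      sq_nonneg (ss1 U - v * u)]
  have hS2 : -(v * u) ≤ ss2 U := by
    nlinarith [hs2, sq_nonneg (ss2 U + v * u), mul_nonneg hv0 hu0, hu2, hv2,
      sq_nonneg (ss2 U - v * u)]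
  have hw5 : Real.sqrt 5 * Real.sqrt 5 = 5 := Real.mul_self_sqrt (by norm_num)
  have hw0 : 0 ≤ Real.sqrt 5 := Real.sqrt_nonneg 5
  have hw2 : (2:ℝ) ≤ Real.sqrt 5 := by nlinarith [hw5, hw0]
  have hw3 : Real.sqrt 5 ≤ 3 := by nlinarith [hw5, hw0]
  have hc14 : c ≤ 1/4 := by linarith
  have h4c : 0 ≤ 4 * c * c - 6 * c + 1 := by
    have hA : 0 ≤ (3 - Real.sqrt 5) / 4 - c := by linarith
    have hB : 0 ≤ (3 + Real.sqrt 5) / 4 - c := by linarith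
    nlinarith [mul_nonneg hA hB, hw5]
  have h1mc : 0 ≤ 1 - 2 * c := by linarith
  nlinarith [hS1, hS2, hu2, hv2, hKK, h4c, h1mc, hp, hq,
    sq_nonneg (2 * u - (1 - 2 * c) * v),
    mul_nonneg h4c (mul_self_nonneg u),
    mul_nonneg h1mc hKK,
    mul_nonneg hu0 hv0]
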